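/- Let γ : [0,1] → ℂ be an injective continuously differentiable curve with nowhere vanishing derivative, let z₀ = γ(0) be its initial endpoint, and let g be holomorphic on an open set U containing the image of γ. Then there exist an open neighborhood V ⊆ U of z₀, a holomorphic function Ĩ on V, and a holomorphic function L on V \ γ([0,1]) satisfying exp(L(t)) = t − z₀ for all t ∈ V \ γ([0,1]) (a branch of log(t − z₀)), such that for every t ∈ V \ γ([0,1]): (1/(2πi)) ∫₀¹ g(γ(s)) γ'(s)/(γ(s) − t) ds = Ĩ(t) − (1/(2πi)) g(t) L(t). -/

import Mathlib

open MeasureTheory Set Metric Filter Topology intervalIntegral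
open Interval

lemma dslope_comm' (f : ℂ → ℂ) (a b : ℂ) : dslope f a b = dslope f b a := by
  rcases eq_or_ne a b with rfl | h
  · rfl
  · rw [dslope_of_ne f h.symm, dslope_of_ne f h, slope_comm]

lemma contOn_aesm {f : ℝ → ℂ} (h : ContinuousOn f (Icc (0:ℝ) 1)) :
    AEStronglyMeasurable f (volume.restrict (Ι (0:ℝ) 1)) := by
  have hIoc : (Ι (0:ℝ) 1) ⊆ Icc 0 1 := by
    rw [uIoc_of_le zero_le_one]; exact Ioc_subset_Icc_self
  exact (h.aestronglyMeasurable measurableSet_Icc).mono_measure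
    (Measure.restrict_mono hIoc le_rfl)

lemma hasDerivAt_param_integral (F F' : ℂ → ℝ → ℂ) (t₀ : ℂ) (ε C : ℝ) (hε : 0 < ε)
    (hmeas : ∀ t ∈ ball t₀ ε, ContinuousOn (F t) (Icc (0:ℝ) 1))
    (hdiff : ∀ s ∈ Icc (0:ℝ) 1, ∀ t ∈ ball t₀ ε, HasDerivAt (fun t => F t s) (F' t s) t)
    (hbound : ∀ s ∈ Icc (0:ℝ) 1, ∀ t ∈ ball t₀ ε, ‖F' t s‖ ≤ C) :
    HasDerivAt (fun t => ∫ s in (0:ℝ)..1, F t s) (∫ s in (0:ℝ)..1, F' t₀ s) t₀ := by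
  have hIoc : (Ι (0:ℝ) 1) ⊆ Icc 0 1 := by
    rw [uIoc_of_le zero_le_one]; exact Ioc_subset_Icc_self
  have ht₀ : t₀ ∈ ball t₀ ε := mem_ball_self hε
  have hseqval : ∀ n : ℕ, ((ε / (n + 2) : ℝ) : ℂ) ≠ 0 := by
    intro n
    simp only [ne_eq, Complex.ofReal_eq_zero]
    positivity
  have hseq : ∀ n : ℕ, t₀ + ((ε / (n + 2) : ℝ) : ℂ) ∈ ball t₀ ε := by
    intro n
    simp only [mem_ball, dist_eq_norm, add_sub_cancel_left]
    rw [Complex.norm_real, Real.norm_eq_abs, abs_of_pos (by positivity)]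
    rw [div_lt_iff₀ (by positivity)]
    nlinarith
  have hF'meas : AEStronglyMeasurable (F' t₀) (volume.restrict (Ι (0:ℝ) 1)) := by
    apply aestronglyMeasurable_of_tendsto_ae (u := atTop)
        (f := fun (n : ℕ) s => slope (fun t => F t s) t₀ (t₀ + ((ε / (n + 2) : ℝ) : ℂ)))
    · intro n
      apply contOn_aesm
      have h1 : ContinuousOn (F (t₀ + ((ε / (n + 2) : ℝ) : ℂ))) (Icc (0:ℝ) 1) :=
        hmeas _ (hseq n)
      have h0 : ContinuousOn (F t₀) (Icc (0:ℝ) 1) := hmeas _ ht₀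
      simp only [slope_def_field]
      exact (h1.sub h0).div_const _
    · rw [ae_restrict_iff' measurableSet_uIoc]
      apply ae_of_all
      intro s hs
      have hd := hdiff s (hIoc hs) t₀ ht₀
      have htend := hasDerivAt_iff_tendsto_slope.mp hd
      apply htend.comp
      rw [tendsto_nhdsWithin_iff]
      constructor
      · have h2 : Tendsto (fun n : ℕ => ((n:ℝ) + 2)) atTop atTop :=
          tendsto_atTop_add_const_right atTop 2 tendsto_natCast_atTop_atTop
        have h3 : Tendsto (fun n : ℕ => (ε / (n + 2) : ℝ)) atTop (𝓝 0) :=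
          tendsto_const_nhds.div_atTop h2
        have h4 : Tendsto (fun n : ℕ => ((ε / (n + 2) : ℝ) : ℂ)) atTop (𝓝 0) := by
          have := (Complex.continuous_ofReal.tendsto 0).comp h3
          simpa [Function.comp_def] using this
        have := h4.const_add t₀
        simpa using this
      · apply Eventually.of_forall
        intro n
        simp only [mem_compl_iff, mem_singleton_iff]
        intro h
        apply hseqval n
        have := congrArg (fun z => z - t₀) h
        simpa using this
  have := intervalIntegral.hasDerivAt_integral_of_dominated_loc_of_deriv_le
      (F := F) (F' := F') (x₀ := t₀) (bound := fun _ => C) (a := 0) (b := 1) (μ := volume) (ball_mem_nhds t₀ hε)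
      ?_ ?_ hF'meas ?_ ?_ ?_
  · exact this.2
  · filter_upwards [ball_mem_nhds t₀ hε] with t ht
    exact contOn_aesm (hmeas t ht)
  · exact (hmeas t₀ ht₀).intervalIntegrable_of_Icc zero_le_one
  · apply ae_of_all
    intro s hs t ht
    exact hbound s (hIoc hs) t ht
  · exact intervalIntegrable_const
  · apply ae_of_all
    intro s hs t ht
    exact hdiff s (hIoc hs) t ht


/-- The Cauchy type integral `I(γ,g,t)` of `g` along the curve `γ` (with derivative `γ'`). -/
noncomputable def cauchyTypeIntegral (γ γ' : ℝ → ℂ) (g : ℂ → ℂ) (t : ℂ) : ℂ :=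
  (1 / (2 * Real.pi * Complex.I)) * ∫ s in (0:ℝ)..1, g (γ s) * γ' s / (γ s - t)

theorem stmt6 (γ γ' : ℝ → ℂ)
    (hderiv : ∀ s ∈ Set.Icc (0:ℝ) 1, HasDerivWithinAt γ (γ' s) (Set.Icc 0 1) s)
    (hcont : ContinuousOn γ' (Set.Icc 0 1))
    (hne : ∀ s ∈ Set.Icc (0:ℝ) 1, γ' s ≠ 0)
    (hinj : Set.InjOn γ (Set.Icc 0 1))
    (U : Set ℂ) (hUopen : IsOpen U) (himage : γ '' Set.Icc 0 1 ⊆ U)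
    (g : ℂ → ℂ) (hg : DifferentiableOn ℂ g U) :
    ∃ V : Set ℂ, IsOpen V ∧ γ 0 ∈ V ∧ V ⊆ U ∧
      ∃ Itil L : ℂ → ℂ, DifferentiableOn ℂ Itil V ∧
        DifferentiableOn ℂ L (V \ γ '' Set.Icc 0 1) ∧
        (∀ t ∈ V \ γ '' Set.Icc 0 1, Complex.exp (L t) = t - γ 0) ∧
        (∀ t ∈ V \ γ '' Set.Icc 0 1,
          cauchyTypeIntegral γ γ' g t =
            Itil t - (1 / (2 * Real.pi * Complex.I)) * g t * L t) := by
  have h0 : (0:ℝ) ∈ Icc (0:ℝ) 1 := ⟨le_refl 0, zero_le_one⟩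
  have h1 : (1:ℝ) ∈ Icc (0:ℝ) 1 := ⟨zero_le_one, le_refl 1⟩
  have hγcont : ContinuousOn γ (Icc 0 1) := fun s hs => (hderiv s hs).continuousWithinAt
  set K := γ '' Icc 0 1 with hKdef
  have hK : IsCompact K := isCompact_Icc.image_of_continuousOn hγcont
  have hKU : K ⊆ U := himage
  have hz₀K : γ 0 ∈ K := mem_image_of_mem _ h0
  obtain ⟨δ, δpos, hδ⟩ := hK.exists_cthickening_subset_open hUopen hKU
  set K' := cthickening δ K with hK'def
  have hK'c : IsCompact K' := hK.cthickening
  have hKK' : K ⊆ K' := self_subset_cthickening K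
  have hballK' : ∀ c ∈ K, closedBall c δ ⊆ K' := fun c hc =>
    closedBall_subset_cthickening hc δ
  obtain ⟨Mg, hMg⟩ := hK'c.exists_bound_of_continuousOn (hg.continuousOn.mono hδ)
  have hMg0 : 0 ≤ Mg := le_trans (norm_nonneg _) (hMg _ (hKK' hz₀K))
  obtain ⟨Cγ, hCγ⟩ := isCompact_Icc.exists_bound_of_continuousOn hcont
  have hCγ0 : 0 ≤ Cγ := le_trans (norm_nonneg _) (hCγ 0 h0)
  set B := 4 * Mg / δ with hBdef
  -- uniform bound on dslope on K'
  have hB : ∀ c ∈ K, ∀ z ∈ K', ‖dslope g c z‖ ≤ B := by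
    intro c hc z hz
    have hcU : c ∈ U := hKU hc
    have hcK' : closedBall c δ ⊆ U := (hballK' c hc).trans hδ
    have sphere_bound : ∀ w ∈ sphere c δ, ‖dslope g c w‖ ≤ B := by
      intro w hw
      have hwc : w ≠ c := by
        intro h; rw [mem_sphere, h, dist_self] at hw; exact δpos.ne hw
      rw [dslope_of_ne g hwc, slope_def_field, div_eq_mul_inv, norm_mul, norm_inv]
      have hwK' : w ∈ K' := hballK' c hc (sphere_subset_closedBall hw)
      have h2 : ‖g w - g c‖ ≤ 2 * Mg :=
        (norm_sub_le _ _).trans (by linarith [hMg w hwK', hMg c (hKK' hc)])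
      have h3 : ‖w - c‖ = δ := by rwa [← dist_eq_norm, ← mem_sphere]
      rw [h3, hBdef]
      rw [div_eq_mul_inv (4 * Mg) δ]
      have : (0:ℝ) < δ⁻¹ := by positivity
      nlinarith [norm_nonneg (g w - g c)]
    by_cases hzc : δ / 2 ≤ dist z c
    · have hzc' : z ≠ c := by
        intro h; rw [h, dist_self] at hzc; linarith
      rw [dslope_of_ne g hzc', slope_def_field, div_eq_mul_inv, norm_mul, norm_inv]
      have h2 : ‖g z - g c‖ ≤ 2 * Mg :=
        (norm_sub_le _ _).trans (by linarith [hMg z hz, hMg c (hKK' hc)])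
      have h3 : ‖z - c‖⁻¹ ≤ 2 / δ := by
        rw [← dist_eq_norm, ← inv_div δ 2]
        exact inv_anti₀ (by positivity) hzc
      calc ‖g z - g c‖ * ‖z - c‖⁻¹ ≤ (2 * Mg) * (2 / δ) := by
            apply mul_le_mul h2 h3 (by positivity) (by positivity)
        _ = B := by rw [hBdef]; ring
    · push_neg at hzc
      have hdc : DiffContOnCl ℂ (dslope g c) (ball c δ) := by
        constructor
        · exact (Complex.differentiableOn_dslope (ball_mem_nhds c δpos)).mpr
            (hg.mono (ball_subset_closedBall.trans hcK'))
        · rw [closure_ball c δpos.ne']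
          exact ((continuousOn_dslope (closedBall_mem_nhds c δpos)).mpr
            ⟨hg.continuousOn.mono hcK', hg.differentiableAt (hUopen.mem_nhds hcU)⟩)
      have := Complex.norm_le_of_forall_mem_frontier_norm_le isBounded_ball hdc
        (fun w hw => sphere_bound w (by rwa [frontier_ball c δpos.ne'] at hw)) (z := z) ?_
      · exact this
      · rw [closure_ball c δpos.ne']
        exact mem_closedBall.mpr (by linarith)
  -- choose the neighborhood
  have hγ10 : γ 1 ≠ γ 0 := fun h => one_ne_zero (hinj h1 h0 h)
  have hd1pos : 0 < ‖γ 1 - γ 0‖ := by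
    rw [norm_pos_iff, sub_ne_zero]; exact hγ10
  set ε := min (δ / 2) (‖γ 1 - γ 0‖ / 4) with hεdef
  have εpos : 0 < ε := lt_min (by positivity) (by positivity)
  have hεδ : 2 * ε ≤ δ := by
    have := min_le_left (δ / 2) (‖γ 1 - γ 0‖ / 4); linarith
  have hεd1 : 4 * ε ≤ ‖γ 1 - γ 0‖ := by
    have := min_le_right (δ / 2) (‖γ 1 - γ 0‖ / 4); linarith
  set V := ball (γ 0) ε with hVdef
  have hVopen : IsOpen V := isOpen_ball
  have hz₀V : γ 0 ∈ V := mem_ball_self εpos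
  have h2εK' : closedBall (γ 0) (2 * ε) ⊆ K' :=
    (closedBall_subset_closedBall (by linarith)).trans (hballK' _ hz₀K)
  have hVK' : V ⊆ K' := (ball_subset_closedBall.trans
    (closedBall_subset_closedBall (by linarith : ε ≤ 2 * ε))).trans h2εK'
  have hVU : V ⊆ U := hVK'.trans hδ
  -- derivative bound for dslope on V
  have hDB : ∀ c ∈ K, ∀ t ∈ V, ‖deriv (dslope g c) t‖ ≤ B / ε := by
    intro c hc t ht
    have hball : closedBall t ε ⊆ K' := by
      intro w hw
      apply h2εK'
      rw [mem_closedBall] at hw ⊢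
      calc dist w (γ 0) ≤ dist w t + dist t (γ 0) := dist_triangle _ _ _
        _ ≤ ε + ε := add_le_add hw (le_of_lt ht)
        _ = 2 * ε := by ring
    apply Complex.norm_deriv_le_of_forall_mem_sphere_norm_le εpos
    · constructor
      · exact ((Complex.differentiableOn_dslope (hUopen.mem_nhds (hKU hc))).mpr hg).mono
          ((ball_subset_closedBall.trans hball).trans hδ)
      · exact (((continuousOn_dslope (hUopen.mem_nhds (hKU hc))).mpr
          ⟨hg.continuousOn, hg.differentiableAt (hUopen.mem_nhds (hKU hc))⟩).mono
          ((closure_ball_subset_closedBall.trans hball).trans hδ))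
    · exact fun w hw => hB c hc w (hball (sphere_subset_closedBall hw))
  -- Φ: the regularized integral
  set Φ : ℂ → ℂ := fun t => ∫ s in (0:ℝ)..1, dslope g (γ s) t * γ' s with hΦdef
  have hΦd : ∀ t₀ ∈ V, HasDerivAt Φ
      (∫ s in (0:ℝ)..1, deriv (dslope g (γ s)) t₀ * γ' s) t₀ := by
    intro t₀ ht₀
    have hε' : 0 < ε - dist t₀ (γ 0) := by rwa [sub_pos, ← mem_ball]
    have hsub : ball t₀ (ε - dist t₀ (γ 0)) ⊆ V := by
      intro w hw
      rw [mem_ball] at hw ⊢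
      calc dist w (γ 0) ≤ dist w t₀ + dist t₀ (γ 0) := dist_triangle _ _ _
        _ < ε := by linarith
    apply hasDerivAt_param_integral
      (F := fun t s => dslope g (γ s) t * γ' s)
      (F' := fun t s => deriv (dslope g (γ s)) t * γ' s)
      (t₀ := t₀) (ε := ε - dist t₀ (γ 0)) (C := B / ε * Cγ) hε'
    · intro t ht
      have htU : t ∈ U := hVU (hsub ht)
      have : ContinuousOn (fun s => dslope g t (γ s) * γ' s) (Icc (0:ℝ) 1) := by
        apply ContinuousOn.mul ?_ hcont
        exact ((continuousOn_dslope (hUopen.mem_nhds htU)).mpr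
          ⟨hg.continuousOn, hg.differentiableAt (hUopen.mem_nhds htU)⟩).comp hγcont
          (fun s hs => himage (mem_image_of_mem _ hs))
      exact this.congr (fun s hs => by rw [dslope_comm'])
    · intro s hs t ht
      have hγsU : γ s ∈ U := hKU (mem_image_of_mem _ hs)
      have : DifferentiableAt ℂ (dslope g (γ s)) t :=
        ((Complex.differentiableOn_dslope (hUopen.mem_nhds hγsU)).mpr hg).differentiableAt
          (hUopen.mem_nhds (hVU (hsub ht)))
      exact this.hasDerivAt.mul_const _
    · intro s hs t ht
      rw [norm_mul]
      exact mul_le_mul (hDB _ (mem_image_of_mem _ hs) t (hsub ht)) (hCγ s hs)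
        (norm_nonneg _) (by positivity)
  have hΦdiff : DifferentiableOn ℂ Φ V := fun t ht =>
    ((hΦd t ht).differentiableAt).differentiableWithinAt
  -- J integral
  set J : ℂ → ℂ := fun t => ∫ s in (0:ℝ)..1, γ' s / (γ s - t) with hJdef
  have hJd : ∀ t₀, t₀ ∉ K → DifferentiableAt ℂ J t₀ := by
    intro t₀ ht₀
    have hKclosed : IsClosed K := hK.isClosed
    obtain ⟨r, rpos, hr⟩ := Metric.isOpen_iff.mp hKclosed.isOpen_compl t₀ ht₀
    have hfar : ∀ s ∈ Icc (0:ℝ) 1, ∀ t ∈ ball t₀ (r/2), r / 2 ≤ ‖γ s - t‖ := by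
      intro s hs t ht
      have h1 : r ≤ dist (γ s) t₀ := by
        by_contra h
        push_neg at h
        exact (hr (mem_ball.mpr h)) (mem_image_of_mem _ hs)
      have h2 := dist_triangle (γ s) t t₀
      rw [← dist_eq_norm]
      rw [mem_ball] at ht
      have := dist_comm t t₀
      linarith [dist_comm t t₀ ▸ ht]
    have hne' : ∀ s ∈ Icc (0:ℝ) 1, ∀ t ∈ ball t₀ (r/2), γ s - t ≠ 0 := by
      intro s hs t ht
      rw [← norm_pos_iff]
      linarith [hfar s hs t ht]
    apply HasDerivAt.differentiableAt
      (f' := ∫ s in (0:ℝ)..1, γ' s / (γ s - t₀) ^ 2)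
    apply hasDerivAt_param_integral
      (F := fun t s => γ' s / (γ s - t))
      (F' := fun t s => γ' s / (γ s - t) ^ 2)
      (t₀ := t₀) (ε := r / 2) (C := Cγ / (r/2) ^ 2) (by positivity)
    · intro t ht
      exact hcont.div (hγcont.sub continuousOn_const) (fun s hs => hne' s hs t ht)
    · intro s hs t ht
      have h1 : HasDerivAt (fun t : ℂ => γ s - t) (-1) t := (hasDerivAt_id t).const_sub (γ s)
      have h3 := (h1.inv (hne' s hs t ht)).const_mul (γ' s)
      simpa [div_eq_mul_inv, neg_neg] using h3
    · intro s hs t ht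
      rw [norm_div, norm_pow]
      apply div_le_div₀ (by positivity) (hCγ s hs) (by positivity)
      exact pow_le_pow_left₀ (by positivity) (hfar s hs t ht) 2
  -- the branch of log of (γ 1 - t)
  have hd1ne : γ 1 - γ 0 ≠ 0 := sub_ne_zero.mpr hγ10
  set Lg : ℂ → ℂ := fun t => Complex.log (γ 1 - γ 0) +
    Complex.log ((γ 1 - t) / (γ 1 - γ 0)) with hLgdef
  have hwkey : ∀ t ∈ V, (γ 1 - t) / (γ 1 - γ 0) = 1 + (γ 0 - t) / (γ 1 - γ 0) := by
    intro t ht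
    field_simp
    ring
  have hwnorm : ∀ t ∈ V, ‖(γ 0 - t) / (γ 1 - γ 0)‖ < 1 := by
    intro t ht
    rw [norm_div]
    rw [div_lt_one (by positivity)]
    have : ‖γ 0 - t‖ < ε := by
      rw [mem_ball, dist_eq_norm] at ht
      rwa [norm_sub_rev]
    linarith
  have hslit : ∀ t ∈ V, (γ 1 - t) / (γ 1 - γ 0) ∈ Complex.slitPlane := by
    intro t ht
    rw [hwkey t ht]
    exact Complex.mem_slitPlane_of_norm_lt_one (hwnorm t ht)
  have hLgdiff : ∀ t ∈ V, DifferentiableAt ℂ Lg t := by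
    intro t ht
    apply DifferentiableAt.const_add
    have hin : DifferentiableAt ℂ (fun t : ℂ => (γ 1 - t) / (γ 1 - γ 0)) t :=
      ((differentiable_const (γ 1)).sub differentiable_id).differentiableAt.div_const _
    exact (Complex.differentiableAt_log (hslit t ht)).comp t hin
  have hLgexp : ∀ t ∈ V, Complex.exp (Lg t) = γ 1 - t := by
    intro t ht
    have hwne : (γ 1 - t) / (γ 1 - γ 0) ≠ 0 := Complex.slitPlane_ne_zero (hslit t ht)
    rw [hLgdef]
    simp only []
    rw [Complex.exp_add, Complex.exp_log hd1ne, Complex.exp_log hwne]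
    field_simp
  -- the key ODE identity: exp (J t) = (γ 1 - t) / (γ 0 - t) for t off the curve
  have hmainexp : ∀ t, t ∉ K → Complex.exp (-(J t)) * (γ 1 - t) = γ 0 - t := by
    intro t ht
    have hne' : ∀ s ∈ Icc (0:ℝ) 1, γ s - t ≠ 0 := by
      intro s hs h
      exact ht (by rw [hKdef]; exact ⟨s, hs, by rwa [sub_eq_zero] at h⟩)
    set q : ℝ → ℝ := fun u => max 0 (min 1 u) with hqdef
    have hqcont : Continuous q := continuous_const.max (continuous_const.min continuous_id)
    have hqmem : ∀ u, q u ∈ Icc (0:ℝ) 1 := fun u =>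
      ⟨le_max_left _ _, max_le zero_le_one (min_le_left _ _)⟩
    have hqid : ∀ u ∈ Icc (0:ℝ) 1, q u = u := by
      intro u hu
      rw [hqdef]
      simp only []
      rw [min_eq_right hu.2, max_eq_right hu.1]
    set f : ℝ → ℂ := fun u => γ' (q u) / (γ (q u) - t) with hfdef
    have hfcont : Continuous f := by
      apply Continuous.div
      · exact hcont.comp_continuous hqcont hqmem
      · exact (hγcont.comp_continuous hqcont hqmem).sub continuous_const
      · exact fun u => hne' (q u) (hqmem u)
    set F : ℝ → ℂ := fun x => ∫ u in (0:ℝ)..x, f u with hFdef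
    have hF : ∀ x, HasDerivAt F (f x) x := fun x =>
      (hfcont.integral_hasStrictDerivAt 0 x).hasDerivAt
    set E : ℝ → ℂ := fun x => Complex.exp (-F x) * (γ x - t) with hEdef
    have hEderiv : ∀ x ∈ Ico (0:ℝ) 1, HasDerivWithinAt E 0 (Ici x) x := by
      intro x hx
      have hxI : x ∈ Icc (0:ℝ) 1 := ⟨hx.1, le_of_lt hx.2⟩
      have h2 : HasDerivWithinAt (fun x => Complex.exp (-F x))
          (Complex.exp (-F x) * (-f x)) (Icc (0:ℝ) 1) x :=
        (((hF x).hasDerivWithinAt).neg).cexp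
      have h3 : HasDerivWithinAt (fun x => γ x - t) (γ' x) (Icc (0:ℝ) 1) x :=
        (hderiv x hxI).sub_const t
      have h4 := h2.mul h3
      have h5 : Complex.exp (-F x) * -f x * (γ x - t) + Complex.exp (-F x) * γ' x = 0 := by
        rw [hfdef]
        simp only []
        rw [hqid x hxI]
        have hx0 : γ x - t ≠ 0 := hne' x hxI
        field_simp
        ring
      have h6 : HasDerivWithinAt E 0 (Icc (0:ℝ) 1) x := by
        rw [hEdef]
        exact h5 ▸ h4
      apply h6.mono_of_mem_nhdsWithin
      rw [mem_nhdsWithin]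
      exact ⟨Iio 1, isOpen_Iio, hx.2, fun u hu => ⟨le_trans hx.1 hu.2, le_of_lt hu.1⟩⟩
    have hFcont : Continuous F :=
      continuous_iff_continuousAt.mpr (fun x => (hF x).continuousAt)
    have hEcont : ContinuousOn E (Icc (0:ℝ) 1) :=
      (Complex.continuous_exp.comp hFcont.neg).continuousOn.mul
        (hγcont.sub continuousOn_const)
    have hE10 : E 1 = E 0 :=
      constant_of_has_deriv_right_zero hEcont hEderiv 1 h1
    have hF0 : F 0 = 0 := by rw [hFdef]; simp
    have hJF : J t = F 1 := by
      rw [hJdef, hFdef]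
      simp only []
      apply intervalIntegral.integral_congr
      intro u hu
      rw [uIcc_of_le zero_le_one] at hu
      simp only [hfdef]
      rw [hqid u hu]
    rw [hJF]
    have := hE10
    rw [hEdef] at this
    simp only [hF0, neg_zero, Complex.exp_zero, one_mul] at this
    exact this
  -- assemble
  set L : ℂ → ℂ := fun t => Lg t + Real.pi * Complex.I - J t with hLdef
  set Itil : ℂ → ℂ := fun t =>
    (1 / (2 * Real.pi * Complex.I)) * (Φ t + g t * (Lg t + Real.pi * Complex.I)) with hItildef
  have hItildiff : DifferentiableOn ℂ Itil V := by
    apply DifferentiableOn.const_mul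
    apply hΦdiff.add
    apply (hg.mono hVU).mul
    exact fun t ht => ((hLgdiff t ht).add_const _).differentiableWithinAt
  have hLdiff : DifferentiableOn ℂ L (V \ K) := fun t ht =>
    (((hLgdiff t ht.1).add_const _).sub (hJd t ht.2)).differentiableWithinAt
  have hexpL : ∀ t ∈ V \ K, Complex.exp (L t) = t - γ 0 := by
    intro t ht
    rw [hLdef]
    simp only []
    rw [sub_eq_add_neg, Complex.exp_add, Complex.exp_add, hLgexp t ht.1,
      Complex.exp_pi_mul_I]
    linear_combination (-1 : ℂ) * hmainexp t ht.2
  have hfinal : ∀ t ∈ V \ K,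
      (1 / (2 * Real.pi * Complex.I)) * (∫ s in (0:ℝ)..1, g (γ s) * γ' s / (γ s - t)) =
        Itil t - (1 / (2 * Real.pi * Complex.I)) * g t * L t := by
    intro t ht
    have htU : t ∈ U := hVU ht.1
    have hts : ∀ s ∈ Icc (0:ℝ) 1, γ s - t ≠ 0 := by
      intro s hs h
      exact ht.2 (by rw [hKdef]; exact ⟨s, hs, by rwa [sub_eq_zero] at h⟩)
    have hint1 : IntervalIntegrable (fun s => dslope g (γ s) t * γ' s) volume 0 1 := by
      apply ContinuousOn.intervalIntegrable_of_Icc zero_le_one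
      have : ContinuousOn (fun s => dslope g t (γ s) * γ' s) (Icc (0:ℝ) 1) := by
        apply ContinuousOn.mul ?_ hcont
        exact ((continuousOn_dslope (hUopen.mem_nhds htU)).mpr
          ⟨hg.continuousOn, hg.differentiableAt (hUopen.mem_nhds htU)⟩).comp hγcont
          (fun s hs => himage (mem_image_of_mem _ hs))
      exact this.congr (fun s hs => by rw [dslope_comm'])
    have hint2 : IntervalIntegrable (fun s => g t * (γ' s / (γ s - t))) volume 0 1 := by
      apply ContinuousOn.intervalIntegrable_of_Icc zero_le_one
      exact (hcont.div (hγcont.sub continuousOn_const) hts).const_smul (g t)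
    have key : (∫ s in (0:ℝ)..1, g (γ s) * γ' s / (γ s - t)) = Φ t + g t * J t := by
      have heq : EqOn (fun s => g (γ s) * γ' s / (γ s - t))
          (fun s => dslope g (γ s) t * γ' s + g t * (γ' s / (γ s - t)))
          (uIcc (0:ℝ) 1) := by
        intro s hs
        rw [uIcc_of_le zero_le_one] at hs
        have h1 : γ s - t ≠ 0 := hts s hs
        have h2 : t ≠ γ s := by
          intro h
          exact h1 (by rw [h]; ring)
        simp only []
        have h3 : t - γ s ≠ 0 := sub_ne_zero.mpr h2
        rw [dslope_of_ne g h2, slope_def_field]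
        field_simp
        ring
      rw [intervalIntegral.integral_congr heq, intervalIntegral.integral_add hint1 hint2,
        intervalIntegral.integral_const_mul]
    rw [key, hItildef, hLdef]
    simp only []
    ring
  refine ⟨V, hVopen, hz₀V, hVU, Itil, L, hItildiff, hLdiff, hexpL, ?_⟩
  intro t ht
  rw [cauchyTypeIntegral]
  exact hfinal t ht
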